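/- Let α ∈ (0, 1/2], let M be a surjective isometry of ℝ², let R ≥ 5 + 2^{1+1/α} with ‖M(0)‖ ≤ R, and set P = M '' {y : y₁ ≥ 0 and |y₂| ≤ y₁^α} and Q = M '' {y : y₁ ≥ 0 and 2|y₂| ≤ y₁^α}. Let U ⊆ ℝ² satisfy P ⊆ U and Uᶜ ≠ ∅. Then for every x ∈ Q with ‖x‖ ≥ 2R, one has d(x, ∂U) ≥ 2^{−2−α} ‖x‖^α. -/
import Mathlib

open Metric Set

noncomputable section

lemma coord_dist_le' (z y : EuclideanSpace ℝ (Fin 2)) (i : Fin 2) :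
    |z i - y i| ≤ dist z y := by
  rw [EuclideanSpace.dist_eq, Fin.sum_univ_two]
  have h0 : |z i - y i| = Real.sqrt ((z i - y i)^2) := (Real.sqrt_sq_eq_abs _).symm
  rw [h0]
  apply Real.sqrt_le_sqrt
  fin_cases i <;> simp [Real.dist_eq, sq_abs] <;> positivity

lemma norm_sq_eq' (y : EuclideanSpace ℝ (Fin 2)) : ‖y‖^2 = (y 0)^2 + (y 1)^2 := by
  rw [EuclideanSpace.norm_eq, Real.sq_sqrt (by positivity)]
  simp [Fin.sum_univ_two, sq_abs]

-- pure real-arithmetic core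
lemma core_bounds (α c t r nx b : ℝ) (hα : 0 < α) (hα' : α ≤ 1 / 2)
    (hc1 : 1 ≤ c) (ht : t = c ^ α) (ht2 : t ^ 2 ≤ c) (hc12 : 12 ≤ c)
    (hb : 2 * |b| ≤ t) (hnx : nx ≤ 9/4 * c) (hnx0 : 26 ≤ nx)
    (hr : r = 2 ^ (-2 - α) * nx ^ α) :
    0 < r ∧ r ≤ 4/15 * t ∧ r < c ∧ 3 * t ≤ c := by
  have hc0 : (0:ℝ) ≤ c := by linarith
  have ht0 : 0 ≤ t := ht ▸ Real.rpow_nonneg hc0 α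
  have htc : 3 * t ≤ c := by nlinarith [sq_nonneg (c - 3*t)]
  have hrt : r ≤ 4/15 * t := by
    have h1 : nx ^ α ≤ (9/4 * c) ^ α := Real.rpow_le_rpow (by linarith) hnx hα.le
    have h2 : ((9/4:ℝ) * c) ^ α = (9/4:ℝ)^α * t := by
      rw [ht]; exact Real.mul_rpow (by norm_num) hc0
    have h3 : (2:ℝ)^(-2-α : ℝ) = (1/4) * (1/2:ℝ)^α := by
      rw [show (-2-α : ℝ) = (-2) + (-α) by ring, Real.rpow_add (by norm_num : (0:ℝ) < 2)]
      congr 1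
      · rw [show (-2:ℝ) = ((-2:ℤ):ℝ) by norm_num, Real.rpow_intCast]
        norm_num
      · rw [Real.rpow_neg (by norm_num), ← Real.inv_rpow (by norm_num)]
        norm_num
    have h4 : (1/2:ℝ)^α * (9/4:ℝ)^α = (9/8:ℝ)^α := by
      rw [← Real.mul_rpow (by norm_num) (by norm_num)]
      norm_num
    have h5 : (9/8:ℝ)^α ≤ 16/15 := by
      have ha : ((9:ℝ)/8)^α ≤ ((9:ℝ)/8)^((1:ℝ)/2) :=
        Real.rpow_le_rpow_of_exponent_le (by norm_num) hα'
      have hb' : ((9:ℝ)/8)^((1:ℝ)/2) ≤ 16/15 := by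
        rw [← Real.sqrt_eq_rpow]
        rw [show (16:ℝ)/15 = Real.sqrt ((16/15)^2) by rw [Real.sqrt_sq (by norm_num)]]
        exact Real.sqrt_le_sqrt (by norm_num)
      linarith
    have hpow : (0:ℝ) < (2:ℝ)^(-2-α : ℝ) := Real.rpow_pos_of_pos (by norm_num) _
    calc r = (2:ℝ) ^ (-2 - α) * nx ^ α := hr
      _ ≤ (2:ℝ) ^ (-2 - α) * ((9/4) * c) ^ α := mul_le_mul_of_nonneg_left h1 hpow.le
      _ = (1/4) * ((1/2:ℝ)^α * (9/4:ℝ)^α) * t := by rw [h2, h3]; ring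
      _ = (1/4) * (9/8:ℝ)^α * t := by rw [h4]
      _ ≤ (1/4) * (16/15) * t := mul_le_mul_of_nonneg_right (by linarith) ht0
      _ = 4/15 * t := by ring
  have hr0 : 0 < r := by
    rw [hr]
    exact mul_pos (Real.rpow_pos_of_pos (by norm_num) _)
      (Real.rpow_pos_of_pos (by linarith) _)
  exact ⟨hr0, hrt, by linarith, htc⟩

lemma core_key (α c t r z0 : ℝ) (hα : 0 < α) (hα' : α ≤ 1 / 2)
    (ht : t = c ^ α) (hc12 : 12 ≤ c) (hrt : r ≤ 4/15 * t) (htc : 3 * t ≤ c)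
    (hr0 : 0 < r) (hrc : r < c) (hz0 : c - r ≤ z0) :
    t/2 + r ≤ z0 ^ α := by
  have hc0 : (0:ℝ) ≤ c := by linarith
  have ht0 : 0 ≤ t := ht ▸ Real.rpow_nonneg hc0 α
  have hcr0 : 0 < c - r := by linarith
  have h7 : (c - r) ^ α ≤ z0 ^ α := Real.rpow_le_rpow hcr0.le hz0 hα.le
  have h8 : (c - r) ^ α = t * ((c - r)/c) ^ α := by
    rw [ht, ← Real.mul_rpow hc0 (by positivity)]
    congr 1
    field_simp
  have hb1 : (c - r)/c ≤ 1 := by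
    rw [div_le_one (by linarith)]; linarith
  have hb2 : (0:ℝ) < (c - r)/c := by positivity
  have h9 : ((c - r)/c) ^ (1:ℝ) ≤ ((c - r)/c) ^ α :=
    Real.rpow_le_rpow_of_exponent_ge hb2 hb1 (by linarith)
  rw [Real.rpow_one] at h9
  have h10 : t * ((c - r)/c) ≤ t * ((c - r)/c) ^ α :=
    mul_le_mul_of_nonneg_left h9 ht0
  have h11 : t/2 + r ≤ t * ((c - r)/c) := by
    rw [mul_div_assoc', le_div_iff₀ (by linarith : (0:ℝ) < c)]
    nlinarith
  linarith [h8 ▸ (h11.trans h10), h7]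

set_option maxHeartbeats 1000000 in
theorem dist_to_frontier_estimate (α : ℝ) (hα : 0 < α) (hα' : α ≤ 1 / 2)
    (M : EuclideanSpace ℝ (Fin 2) ≃ᵢ EuclideanSpace ℝ (Fin 2))
    (R : ℝ) (hR : 5 + 2 ^ (1 + 1 / α) ≤ R) (hRM : ‖M 0‖ ≤ R)
    (P Q : Set (EuclideanSpace ℝ (Fin 2)))
    (hP : P = M '' {y : EuclideanSpace ℝ (Fin 2) | 0 ≤ y 0 ∧ |y 1| ≤ (y 0) ^ α})
    (hQ : Q = M '' {y : EuclideanSpace ℝ (Fin 2) | 0 ≤ y 0 ∧ 2 * |y 1| ≤ (y 0) ^ α})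
    (U : Set (EuclideanSpace ℝ (Fin 2))) (hPU : P ⊆ U) (hUc : Uᶜ.Nonempty)
    (x : EuclideanSpace ℝ (Fin 2)) (hxQ : x ∈ Q) (hx : 2 * R ≤ ‖x‖) :
    2 ^ (-2 - α) * ‖x‖ ^ α ≤ infDist x (frontier U) := by
  rw [hQ] at hxQ
  obtain ⟨y, hymem, hxy⟩ := hxQ
  obtain ⟨hy0, hy1⟩ := hymem
  obtain ⟨c, hcdef⟩ : ∃ c, y 0 = c := ⟨_, rfl⟩
  obtain ⟨b, hbdef⟩ : ∃ b, y 1 = b := ⟨_, rfl⟩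
  obtain ⟨t, htdef⟩ : ∃ t, c ^ α = t := ⟨_, rfl⟩
  obtain ⟨r, hrdef⟩ : ∃ r, (2:ℝ) ^ (-2 - α) * ‖x‖ ^ α = r := ⟨_, rfl⟩
  rw [hcdef] at hy0
  rw [show (2 * |y 1| ≤ y 0 ^ α) = (2 * |b| ≤ t) by rw [hcdef, hbdef, htdef]] at hy1
  rw [hrdef]
  -- R is big
  have h1α : (2:ℝ) ≤ 1 / α := by
    rw [le_div_iff₀ hα]; linarith
  have h2pow : (4:ℝ) ≤ (2:ℝ) ^ (1/α : ℝ) := by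
    have h := Real.rpow_le_rpow_of_exponent_le one_le_two h1α
    rw [show (2:ℝ) = ((2:ℕ):ℝ) by norm_num, Real.rpow_natCast] at h
    norm_num at h
    rw [one_div]
    linarith
  have hR13 : (13:ℝ) ≤ R := by
    have h : (2:ℝ) ^ (1 + 1/α : ℝ) = 2 * (2:ℝ) ^ (1/α : ℝ) := by
      rw [Real.rpow_add (by norm_num), Real.rpow_one]
    rw [h] at hR
    linarith
  have hxn : (26:ℝ) ≤ ‖x‖ := by linarith
  -- ‖y‖ ≥ R
  have hdyx : dist x (M 0) = ‖y‖ := by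
    rw [← hxy, M.dist_eq, dist_zero_right]
  have hyR : R ≤ ‖y‖ := by
    have h := norm_sub_norm_le x (M 0)
    rw [← dist_eq_norm, hdyx] at h
    linarith
  have hxy2 : ‖x‖ ≤ ‖y‖ + R := by
    have h := dist_triangle x (M 0) 0
    rw [hdyx, dist_zero_right, dist_zero_right] at h
    linarith
  have hnormy : ‖y‖^2 = c^2 + b^2 := by
    rw [← hcdef, ← hbdef]; exact norm_sq_eq' y
  -- 1 ≤ c
  have hc1 : 1 ≤ c := by
    by_contra hlt
    push_neg at hlt
    have hle : t ≤ 1 := htdef ▸ Real.rpow_le_one hy0 hlt.le hα.le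
    have hy13 : 13 ≤ ‖y‖ := by linarith
    have hb2 : b^2 ≤ 1/4 := by nlinarith [sq_abs b, abs_nonneg b]
    have hy169 : (169:ℝ) ≤ ‖y‖^2 := by nlinarith
    nlinarith
  have hc0 : (0:ℝ) ≤ c := by linarith
  -- t^2 ≤ c
  have ht2 : t^2 ≤ c := by
    have h1 : t^2 = c ^ (α * 2) := by
      rw [← htdef, ← Real.rpow_natCast (c ^ α) 2, ← Real.rpow_mul hc0]
      norm_num
    have h2 : c ^ (α * 2) ≤ c ^ (1:ℝ) :=
      Real.rpow_le_rpow_of_exponent_le hc1 (by linarith)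
    rw [Real.rpow_one] at h2
    linarith
  -- ‖y‖ ≤ c + 1 and c ≥ 12
  have hb4 : 4 * b^2 ≤ c := by nlinarith [sq_abs b, abs_nonneg b]
  have hsq : ‖y‖^2 ≤ (c + 1)^2 := by nlinarith
  have hy_le : ‖y‖ ≤ c + 1 := by nlinarith [norm_nonneg y]
  have hc12 : (12:ℝ) ≤ c := by linarith
  have hx94 : ‖x‖ ≤ 9/4 * c := by linarith
  obtain ⟨hr0, hrt, hrc, htc⟩ :=
    core_bounds α c t r ‖x‖ b hα hα' hc1 htdef.symm ht2 hc12 hy1 hx94 hxn hrdef.symm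
  -- ball x r ⊆ U
  have hball : ball x r ⊆ U := by
    intro w hw
    apply hPU
    rw [hP]
    refine ⟨M.symm w, ?_, M.apply_symm_apply w⟩
    have hd : dist (M.symm w) y = dist w x := by
      rw [show y = M.symm x by rw [← hxy, M.symm_apply_apply], M.symm.dist_eq]
    have hwx : dist w x < r := mem_ball.mp hw
    have h0 := coord_dist_le' (M.symm w) y 0
    have h1 := coord_dist_le' (M.symm w) y 1
    rw [hd, hcdef] at h0
    rw [hd, hbdef] at h1
    have hz0 : c - r ≤ M.symm w 0 := by
      have := (abs_le.mp (h0.trans hwx.le)).1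
      linarith
    have hz1 : |M.symm w 1| ≤ t/2 + r := by
      have h2 := abs_sub_abs_le_abs_sub (M.symm w 1) b
      have h3 := h1.trans hwx.le
      linarith
    have hkey : t/2 + r ≤ (M.symm w 0) ^ α :=
      core_key α c t r (M.symm w 0) hα hα' htdef.symm hc12 hrt htc hr0 hrc hz0
    exact ⟨by linarith, le_trans hz1 hkey⟩

  -- x ∈ U
  have hxU : x ∈ U := by
    apply hPU
    rw [hP]
    refine ⟨y, ⟨?_, ?_⟩, hxy⟩
    · rw [hcdef]; exact hy0
    · show |y 1| ≤ y 0 ^ α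
      rw [hcdef, hbdef, htdef]
      linarith [abs_nonneg b]
  -- frontier nonempty
  have hfr : (frontier U).Nonempty := by
    rcases eq_empty_or_nonempty (frontier U) with h | h
    · exfalso
      have hcl : IsClopen U := isClopen_iff_frontier_eq_empty.mpr h
      rcases isClopen_iff.mp hcl with h' | h'
      · rw [h'] at hxU; exact hxU
      · obtain ⟨p, hp⟩ := hUc
        exact hp (h' ▸ mem_univ p)
    · exact h
  by_contra hlt
  push_neg at hlt
  obtain ⟨p, hp, hdp⟩ := (Metric.infDist_lt_iff hfr).mp hlt
  have hpball : p ∈ ball x r := mem_ball'.mpr hdp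
  have hpint : p ∈ interior U := interior_maximal hball isOpen_ball hpball
  exact hp.2 hpint
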